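/- Let λ > 0, set φ = e^{−λ}, r = (1 − λ − e^{−2λ}(1+λ)) / (1 − 2λe^{−λ} − e^{−2λ}), and θ = −r − √(r² − 1). Then (φ + θ)(1 + φθ) / (1 + 2φθ + θ²) = (1 − e^{−λ})² / (2(e^{−λ} + λ − 1)). In other words, the lag-1 autocorrelation of the ARMA(1,1) process with autoregressive parameter φ and moving-average parameter θ equals the lag-1 autocorrelation of the increments (over unit intervals) of the integrated Ornstein–Uhlenbeck process with mean-reversion rate λ. -/

import Mathlib

-- Lemma A: 2(1 - e^{-λ}) < λ(1 + e^{-λ}) for λ > 0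
lemma tanh_aux (lam : ℝ) (hlam : 0 < lam) :
    2 * (1 - Real.exp (-lam)) < lam * (1 + Real.exp (-lam)) := by
  set x := Real.exp (-lam) with hxdef
  have hx0 : 0 < x := Real.exp_pos _
  rcases le_or_gt 2 lam with h2 | h2
  · nlinarith
  rcases le_or_gt 1 lam with h1 | h1
  · -- 1 ≤ λ < 2 : x = e^{1-λ} * e^{-1} ≥ (2-λ)/e > (2-λ)/3
    have he : Real.exp 1 < 3 := by
      have := Real.exp_one_lt_d9
      linarith
    have hsplit : x = Real.exp (1 - lam) / Real.exp 1 := by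
      rw [hxdef, ← Real.exp_sub]; ring_nf
    have hlow : (2 - lam) ≤ Real.exp (1 - lam) := by
      have := Real.add_one_le_exp (1 - lam)
      linarith
    have he0 : (0:ℝ) < Real.exp 1 := Real.exp_pos 1
    have hx : (2 - lam) / 3 < x := by
      rw [hsplit]
      rw [div_lt_div_iff₀ (by norm_num) he0]
      nlinarith
    nlinarith
  · -- 0 < λ < 1 : Taylor bound of order 6
    have hb := Real.exp_bound (x := -lam) (by rw [abs_neg, abs_of_pos hlam]; linarith)
      (n := 6) (by norm_num)
    rw [abs_neg, abs_of_pos hlam] at hb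
    have hsum : ∑ m ∈ Finset.range 6, (-lam) ^ m / (Nat.factorial m : ℝ)
        = 1 - lam + lam^2/2 - lam^3/6 + lam^4/24 - lam^5/120 := by
      simp [Finset.sum_range_succ, Nat.factorial]
      ring
    rw [hsum] at hb
    have hlb : 1 - lam + lam^2/2 - lam^3/6 + lam^4/24 - lam^5/120
        - lam^6 * (7/(720*6)) ≤ x := by
      have := abs_sub_le_iff.mp hb
      have h7 : ((6:ℕ).succ : ℝ) / ((Nat.factorial 6 : ℝ) * 6) = 7/(720*6) := by
        norm_num [Nat.factorial]
      nlinarith [this.2]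
    nlinarith [pow_pos hlam 3, pow_pos hlam 6, sq_nonneg lam,
      mul_pos (pow_pos hlam 3) (sub_pos.mpr h1), pow_lt_one₀ hlam.le h1 (n:=3) (by norm_num)]

-- Lemma B: 1 - 2λe^{-λ} - e^{-2λ} > 0
lemma D_pos (lam : ℝ) (hlam : 0 < lam) :
    0 < 1 - 2 * lam * Real.exp (-lam) - (Real.exp (-lam))^2 := by
  set u := Real.exp lam with hudef
  have hu0 : 0 < u := Real.exp_pos _
  have hxu : Real.exp (-lam) = u⁻¹ := by rw [hudef, ← Real.exp_neg]
  have hq : 1 + lam + lam^2/2 + lam^3/6 ≤ u := by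
    have h := Real.sum_le_exp_of_nonneg hlam.le 4
    have : ∑ i ∈ Finset.range 4, lam ^ i / (Nat.factorial i : ℝ)
        = 1 + lam + lam^2/2 + lam^3/6 := by
      simp [Finset.sum_range_succ, Nat.factorial]
      try ring
    rw [this] at h; exact h
  have hkey : 0 < u^2 - 2*lam*u - 1 := by
    nlinarith [mul_nonneg (sub_nonneg.mpr hq) (by nlinarith : (0:ℝ) ≤ u + (1 + lam + lam^2/2 + lam^3/6) - 2*lam),
      pow_pos hlam 3]
  rw [hxu]
  have hu2 : (0:ℝ) < u^2 := by positivity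
  rw [show (1:ℝ) - 2*lam*u⁻¹ - (u⁻¹)^2 = (u^2 - 2*lam*u - 1) / u^2 by field_simp]
  positivity


/-- Autocovariance matching of the implied ARMA(1,1) representation: for `λ > 0`,
with `φ = e^{−λ}`, `r = (1 − λ − e^{−2λ}(1+λ))/(1 − 2λe^{−λ} − e^{−2λ})` and
`θ = −r − √(r² − 1)`, the lag-1 autocorrelation of the ARMA(1,1) process,
`(φ + θ)(1 + φθ)/(1 + 2φθ + θ²)`, equals the lag-1 autocorrelation
`(1 − e^{−λ})²/(2(e^{−λ} + λ − 1))` of the unit-interval increments of the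
integrated Ornstein–Uhlenbeck process with mean-reversion rate `λ`. -/
theorem implied_arma_lag1_autocorrelation (lam : ℝ) (hlam : 0 < lam)
    (φ r θ : ℝ) (hφ : φ = Real.exp (-lam))
    (hr : r = (1 - lam - Real.exp (-2 * lam) * (1 + lam))
        / (1 - 2 * lam * Real.exp (-lam) - Real.exp (-2 * lam)))
    (hθ : θ = -r - Real.sqrt (r ^ 2 - 1)) :
    (φ + θ) * (1 + φ * θ) / (1 + 2 * φ * θ + θ ^ 2)
      = (1 - Real.exp (-lam)) ^ 2 / (2 * (Real.exp (-lam) + lam - 1)) := by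
  have hx2 : Real.exp (-2 * lam) = Real.exp (-lam) ^ 2 := by
    rw [show (-2 * lam) = (-lam) + (-lam) by ring, Real.exp_add]; ring
  rw [hx2] at hr
  set x := Real.exp (-lam) with hxdef
  have hx0 : 0 < x := Real.exp_pos _
  have hden : 0 < x + lam - 1 := by
    have := Real.add_one_lt_exp (x := -lam) (by linarith : -lam ≠ 0)
    rw [← hxdef] at this; linarith
  have hD : 0 < 1 - 2 * lam * x - x ^ 2 := by
    have := D_pos lam hlam; rw [← hxdef] at this; nlinarith [this]
  have hrD : r * (1 - 2 * lam * x - x ^ 2) = 1 - lam - x ^ 2 * (1 + lam) := by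
    rw [hr]; exact div_mul_cancel₀ _ (ne_of_gt hD)
  have htanh := tanh_aux lam hlam
  rw [← hxdef] at htanh
  have hr1 : r < -1 := by nlinarith [hrD, hD, htanh, hx0]
  have hsq : (0:ℝ) ≤ r ^ 2 - 1 := by nlinarith
  set s := Real.sqrt (r ^ 2 - 1) with hsdef
  have hs2 : s ^ 2 = r ^ 2 - 1 := Real.sq_sqrt hsq
  have hs0 : 0 ≤ s := Real.sqrt_nonneg _
  have hθ0 : 0 < θ := by rw [hθ]; nlinarith
  have hφr : 0 < φ - r := by rw [hφ]; nlinarith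
  have hkey : 1 + 2 * φ * θ + θ ^ 2 = 2 * θ * (φ - r) := by
    rw [hθ]; linear_combination hs2
  have hnum : (φ + θ) * (1 + φ * θ) = θ * (1 + φ ^ 2 - 2 * r * φ) := by
    rw [hθ]; linear_combination φ * hs2
  rw [hkey, hnum]
  rw [show 2 * θ * (φ - r) = θ * (2 * (φ - r)) by ring,
    mul_div_mul_left _ _ (ne_of_gt hθ0)]
  rw [div_eq_div_iff (by linarith) (by linarith)]
  rw [hφ]
  have hG : ((1 + x ^ 2 - 2 * r * x) * (2 * (x + lam - 1))
      - (1 - x) ^ 2 * (2 * (x - r))) * (1 - 2 * lam * x - x ^ 2) = 0 := by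
    linear_combination (2 * ((1 - x) ^ 2 - 2 * x * (x + lam - 1))) * hrD
  rcases mul_eq_zero.mp hG with h | h
  · linarith
  · exact absurd h (ne_of_gt hD)
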